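/- With the notation of the constrained least-squares problem (G full column rank, β = (GᴴG)^{−1}Gᴴy, Ψ = Z(GᴴG)^{−1}Zᴴ invertible), the minimum value of ‖Gx − y‖² over {x : Zx = 0} equals ‖Gβ − y‖² + (Zβ)ᴴ Ψ^{−1} (Zβ). -/
import Mathlib


open Matrix

private lemma sum_norm_sq_eq {n : ℕ} (v : Fin n → ℂ) :
    ((∑ i, ‖v i‖ ^ 2 : ℝ) : ℂ) = star v ⬝ᵥ v := by
  push_cast
  simp only [dotProduct, Pi.star_apply]
  refine Finset.sum_congr rfl fun i _ => ?_
  rw [Complex.star_def, ← Complex.normSq_eq_conj_mul_self, Complex.normSq_eq_norm_sq]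
  norm_cast


/-- The minimum value of the equality-constrained least-squares problem:
with `β = (GᴴG)⁻¹Gᴴy`, `Ψ = Z(GᴴG)⁻¹Zᴴ` invertible, and
`x* = β - (GᴴG)⁻¹ZᴴΨ⁻¹Zβ` the constrained minimizer,
`‖Gx* - y‖² = ‖Gβ - y‖² + (Zβ)ᴴ Ψ⁻¹ (Zβ)`. -/
theorem constrained_least_squares_min_value (L N P : ℕ)
    (G : Matrix (Fin L) (Fin N) ℂ) (Z : Matrix (Fin P) (Fin N) ℂ)
    (y : Fin L → ℂ)
    (hrank : ∀ x : Fin N → ℂ, G.mulVec x = 0 → x = 0)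
    (hGdet : IsUnit (Gᴴ * G).det)
    (hΨ : IsUnit (Z * (Gᴴ * G)⁻¹ * Zᴴ).det)
    (β : Fin N → ℂ) (hβ : β = ((Gᴴ * G)⁻¹ * Gᴴ).mulVec y)
    (xstar : Fin N → ℂ)
    (hxstar : xstar = β -
      ((Gᴴ * G)⁻¹ * Zᴴ * (Z * (Gᴴ * G)⁻¹ * Zᴴ)⁻¹ * Z).mulVec β) :
    ((∑ i, ‖(G.mulVec xstar - y) i‖ ^ 2 : ℝ) : ℂ) =
      ((∑ i, ‖(G.mulVec β - y) i‖ ^ 2 : ℝ) : ℂ) +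
        star (Z.mulVec β) ⬝ᵥ ((Z * (Gᴴ * G)⁻¹ * Zᴴ)⁻¹).mulVec (Z.mulVec β) := by
  have hGG : (Gᴴ * G) * (Gᴴ * G)⁻¹ = 1 := Matrix.mul_nonsing_inv _ hGdet
  set Ψ : Matrix (Fin P) (Fin P) ℂ := Z * (Gᴴ * G)⁻¹ * Zᴴ with hΨdef
  have hH1 : ((Gᴴ * G)⁻¹)ᴴ = (Gᴴ * G)⁻¹ := by
    rw [Matrix.conjTranspose_nonsing_inv, Matrix.conjTranspose_mul,
      Matrix.conjTranspose_conjTranspose]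
  have hH2 : Ψᴴ = Ψ := by
    rw [hΨdef, Matrix.conjTranspose_mul, Matrix.conjTranspose_mul,
      Matrix.conjTranspose_conjTranspose, hH1, Matrix.mul_assoc]
  have hH3 : (Ψ⁻¹)ᴴ = Ψ⁻¹ := by
    rw [Matrix.conjTranspose_nonsing_inv, hH2]
  set M : Matrix (Fin N) (Fin N) ℂ := (Gᴴ * G)⁻¹ * Zᴴ * Ψ⁻¹ * Z with hMdef
  set u : Fin L → ℂ := G.mulVec β - y with hudef
  -- residual orthogonality
  have hres : Gᴴ.mulVec u = 0 := by
    rw [hudef, hβ, Matrix.mulVec_sub, Matrix.mulVec_mulVec, Matrix.mulVec_mulVec,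
      ← Matrix.mul_assoc, hGG, Matrix.one_mul, sub_self]
  -- decomposition
  have hdec : G.mulVec xstar - y = -(G.mulVec (M.mulVec β)) + u := by
    rw [hxstar, hudef, Matrix.mulVec_sub]
    abel
  -- key matrix identities
  have e1 : Gᴴ * G * M = Zᴴ * Ψ⁻¹ * Z := by
    rw [hMdef]
    simp only [← Matrix.mul_assoc]
    rw [hGG, Matrix.one_mul]
  have hMH : Mᴴ = Zᴴ * (Ψ⁻¹ * (Z * (Gᴴ * G)⁻¹)) := by
    rw [hMdef, Matrix.conjTranspose_mul, Matrix.conjTranspose_mul, Matrix.conjTranspose_mul,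
      Matrix.conjTranspose_conjTranspose, hH1, hH3]
  have e2 : Mᴴ * (Zᴴ * Ψ⁻¹ * Z) = Zᴴ * (Ψ⁻¹ * Z) := by
    rw [hMH]
    simp only [Matrix.mul_assoc]
    rw [show (Gᴴ * G)⁻¹ * (Zᴴ * (Ψ⁻¹ * Z)) = ((Gᴴ * G)⁻¹ * Zᴴ) * (Ψ⁻¹ * Z) from
      (Matrix.mul_assoc _ _ _).symm]
    rw [show Z * ((Gᴴ * G)⁻¹ * Zᴴ * (Ψ⁻¹ * Z)) = Ψ * (Ψ⁻¹ * Z) from by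
      rw [hΨdef]; simp only [← Matrix.mul_assoc]]
    rw [Matrix.mul_nonsing_inv_cancel_left _ _ hΨ]
  have hM3 : (G * M)ᴴ * (G * M) = Zᴴ * (Ψ⁻¹ * Z) := by
    rw [Matrix.conjTranspose_mul, Matrix.mul_assoc, ← Matrix.mul_assoc Gᴴ G M, e1, e2]
  -- quadratic term
  have hquad : star (G.mulVec (M.mulVec β)) ⬝ᵥ G.mulVec (M.mulVec β) =
      star (Z.mulVec β) ⬝ᵥ (Ψ⁻¹).mulVec (Z.mulVec β) := by
    rw [Matrix.mulVec_mulVec, Matrix.mulVec_mulVec, Matrix.star_mulVec, Matrix.star_mulVec,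
      Matrix.dotProduct_mulVec, Matrix.dotProduct_mulVec, Matrix.vecMul_vecMul,
      Matrix.vecMul_vecMul, hM3]
  -- cross terms vanish
  have hcross1 : star u ⬝ᵥ G.mulVec (M.mulVec β) = 0 := by
    rw [Matrix.dotProduct_mulVec]
    have h : star u ᵥ* G = star (Gᴴ.mulVec u) := by
      rw [Matrix.star_mulVec, Matrix.conjTranspose_conjTranspose]
    rw [h, hres]
    simp
  have hcross2 : star (G.mulVec (M.mulVec β)) ⬝ᵥ u = 0 := by
    rw [Matrix.star_mulVec, ← Matrix.dotProduct_mulVec, hres]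
    simp
  rw [hdec, sum_norm_sq_eq, sum_norm_sq_eq]
  simp only [star_add, star_neg, add_dotProduct, dotProduct_add,
    neg_dotProduct, dotProduct_neg, neg_neg, hcross1, hcross2, hquad]
  ring
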